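/- Let X be a real inner product space. Then for all x, y ∈ X with ‖x‖ = ‖y‖ and all nonzero real γ, ‖x+y‖ ≤ ‖γx + γ⁻¹y‖. -/

import Mathlib

theorem lorch_easy {X : Type*} [NormedAddCommGroup X] [InnerProductSpace ℝ X]
    (x y : X) (h : ‖x‖ = ‖y‖) (γ : ℝ) (hγ : γ ≠ 0) :
    ‖x + y‖ ≤ ‖γ • x + γ⁻¹ • y‖ := by
  have key : ‖x + y‖ ^ 2 ≤ ‖γ • x + γ⁻¹ • y‖ ^ 2 := by
    have hi : γ * (γ⁻¹ * (inner ℝ x y : ℝ)) = inner ℝ x y := by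
      rw [← mul_assoc, mul_inv_cancel₀ hγ, one_mul]
    rw [norm_add_sq_real, norm_add_sq_real, norm_smul, norm_smul,
      real_inner_smul_left, real_inner_smul_right, hi]
    have hγγ : γ * γ⁻¹ = 1 := mul_inv_cancel₀ hγ
    simp only [Real.norm_eq_abs]
    rw [mul_pow, mul_pow, sq_abs, sq_abs, h]
    nlinarith [mul_nonneg (sq_nonneg (γ - γ⁻¹)) (sq_nonneg ‖y‖), hγγ]
  nlinarith [norm_nonneg (x + y), norm_nonneg (γ • x + γ⁻¹ • y), key]
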